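/- For every configuration of n regions on ℝ with density |x| there exists a condensed configuration of n regions with the same list of weighted masses whose total weighted perimeter is at most that of the original configuration; in particular, the new configuration consists of at most 2n intervals, each region consisting of at most 2 intervals, and 0 belongs to the union of its intervals. -/

import Mathlib

open MeasureTheory Finset

/-- A configuration of `n` regions made of `k` nondegenerate closed intervals
with pairwise disjoint interiors, each interval labeled by one of the regions. -/
structure Config (n k : ℕ) where
  lo : Fin k → ℝ
  hi : Fin k → ℝ
  lab : Fin k → Fin n
  nondeg : ∀ j, lo j < hi j
  disj : ∀ i j, i ≠ j → Set.Ioo (lo i) (hi i) ∩ Set.Ioo (lo j) (hi j) = ∅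

namespace Config

variable {n k : ℕ}

/-- Weighted mass of region `i` with respect to the density `|x|`. -/
noncomputable def mass (C : Config n k) (i : Fin n) : ℝ :=
  ∑ j ∈ univ.filter (fun j => C.lab j = i), ∫ x in C.lo j..C.hi j, |x|

/-- The (finite) set of all endpoints of intervals of the configuration. -/
noncomputable def endpointSet (C : Config n k) : Finset ℝ :=
  image C.lo univ ∪ image C.hi univ

/-- Total weighted perimeter with respect to the density `|x|`. -/
noncomputable def perim (C : Config n k) : ℝ :=
  ∑ x ∈ C.endpointSet, |x|

/-- A configuration is condensed if the union of its intervals is a closed interval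
containing `0` and each region has at most one interval contained in `(-∞,0]`
and at most one interval contained in `[0,∞)`. -/
def Condensed (C : Config n k) : Prop :=
  (∃ a b : ℝ, a ≤ 0 ∧ 0 ≤ b ∧ (⋃ j, Set.Icc (C.lo j) (C.hi j)) = Set.Icc a b) ∧
  ∀ i : Fin n,
    (univ.filter (fun j => C.lab j = i ∧ C.hi j ≤ 0)).card ≤ 1 ∧
    (univ.filter (fun j => C.lab j = i ∧ 0 ≤ C.lo j)).card ≤ 1

/-- A configuration is isoperimetric if its total weighted perimeter is least among all
configurations of `n` regions with the same list of weighted masses. -/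
def Isoperimetric (C : Config n k) : Prop :=
  ∀ (k' : ℕ) (C' : Config n k'), (∀ i, C'.mass i = C.mass i) → C.perim ≤ C'.perim

end Config

open scoped Classical

namespace Config

variable {n k : ℕ}

/-! ### Basic facts -/

lemma hi_inj (C : Config n k) : Function.Injective C.hi := by
  intro a b h
  by_contra hne
  have hd := C.disj a b hne
  have h1 : max (C.lo a) (C.lo b) < C.hi b := max_lt (h ▸ C.nondeg a) (C.nondeg b)
  obtain ⟨x, hx⟩ := Set.nonempty_Ioo.2 h1
  refine absurd hd (Set.Nonempty.ne_empty ⟨x, ?_, ?_⟩)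
  · exact ⟨(le_max_left _ _).trans_lt hx.1, h ▸ hx.2⟩
  · exact ⟨(le_max_right _ _).trans_lt hx.1, hx.2⟩

lemma absIntOn {s : Set ℝ} {a b : ℝ} (hs : s ⊆ Set.Ioc a b) :
    IntegrableOn (fun x : ℝ => |x|) s := (continuous_abs.integrableOn_Ioc).mono_set hs

/-- The positive-side mass of region `i`. -/
noncomputable def pm (C : Config n k) (i : Fin n) : ℝ :=
  ∑ j ∈ univ.filter (fun j => C.lab j = i),
    ∫ x in Set.Ioo (C.lo j) (C.hi j) ∩ Set.Ioi 0, |x|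

lemma pieceMeas (C : Config n k) (j : Fin k) :
    MeasurableSet (Set.Ioo (C.lo j) (C.hi j) ∩ Set.Ioi 0) :=
  measurableSet_Ioo.inter measurableSet_Ioi

lemma pieceSub (C : Config n k) (j : Fin k) :
    Set.Ioo (C.lo j) (C.hi j) ∩ Set.Ioi 0 ⊆ Set.Ioc (C.lo j) (C.hi j) :=
  fun x hx => ⟨hx.1.1, hx.1.2.le⟩

lemma pieceInt_nonneg (C : Config n k) (j : Fin k) :
    0 ≤ ∫ x in Set.Ioo (C.lo j) (C.hi j) ∩ Set.Ioi 0, |x| :=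
  setIntegral_nonneg (C.pieceMeas j) (fun x _ => abs_nonneg x)

lemma pm_nonneg (C : Config n k) (i : Fin n) : 0 ≤ C.pm i :=
  Finset.sum_nonneg (fun j _ => C.pieceInt_nonneg j)

/-- The outer bound of region `i` on the positive side. -/
noncomputable def eb (C : Config n k) (i : Fin n) : ℝ :=
  (insert (0:ℝ) ((univ.filter (fun j => C.lab j = i)).image C.hi)).max'
    (insert_nonempty _ _)

lemma eb_nonneg (C : Config n k) (i : Fin n) : 0 ≤ C.eb i :=
  le_max' _ _ (mem_insert_self _ _)

lemma hi_le_eb (C : Config n k) {j : Fin k} {i : Fin n} (h : C.lab j = i) :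
    C.hi j ≤ C.eb i := by
  refine le_max' _ _ (mem_insert_of_mem (mem_image_of_mem _ ?_))
  simp [h]

lemma piece_subset (C : Config n k) {j : Fin k} {i : Fin n} (h : C.lab j = i) :
    Set.Ioo (C.lo j) (C.hi j) ∩ Set.Ioi 0 ⊆ Set.Ioc 0 (C.eb i) :=
  fun x hx => ⟨hx.2, hx.1.2.le.trans (C.hi_le_eb h)⟩

/-- Regions with positive mass on the positive side. -/
noncomputable def sP (C : Config n k) : Finset (Fin n) :=
  univ.filter (fun i => 0 < C.pm i)

lemma mem_sP (C : Config n k) {i : Fin n} : i ∈ C.sP ↔ 0 < C.pm i := by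
  simp [sP]

lemma pm_eq_zero (C : Config n k) {i : Fin n} (h : i ∉ C.sP) : C.pm i = 0 := by
  rw [mem_sP] at h
  push_neg at h
  exact le_antisymm h (C.pm_nonneg i)

lemma eb_pos (C : Config n k) {i : Fin n} (h : i ∈ C.sP) : 0 < C.eb i := by
  by_contra hle
  push_neg at hle
  have hz : C.pm i = 0 := by
    rw [pm]
    refine Finset.sum_eq_zero (fun j hj => ?_)
    simp only [mem_filter, mem_univ, true_and] at hj
    have hempty : Set.Ioo (C.lo j) (C.hi j) ∩ Set.Ioi 0 = ∅ := by
      refine Set.eq_empty_iff_forall_notMem.2 (fun x hx => ?_)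
      have h1 := (C.piece_subset hj) hx
      have h2 : x ≤ 0 := h1.2.trans hle
      exact absurd h1.1 (not_lt.2 h2)
    rw [hempty, setIntegral_empty]
  rw [mem_sP] at h
  linarith

lemma exists_hi_eq (C : Config n k) {i : Fin n} (h : i ∈ C.sP) :
    ∃ j, C.lab j = i ∧ C.hi j = C.eb i := by
  have hm := Finset.max'_mem _ (insert_nonempty (0:ℝ)
    ((univ.filter (fun j => C.lab j = i)).image C.hi))
  rw [Finset.mem_insert] at hm
  rcases hm with h0 | hmem
  · exact absurd h0 (ne_of_gt (C.eb_pos h))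
  · simp only [mem_image, mem_filter, mem_univ, true_and] at hmem
    obtain ⟨j, hj, hje⟩ := hmem
    exact ⟨j, hj, hje⟩

lemma eb_injOn (C : Config n k) : Set.InjOn C.eb (C.sP : Set (Fin n)) := by
  intro a ha b hb hab
  obtain ⟨ja, hja, hja'⟩ := C.exists_hi_eq ha
  obtain ⟨jb, hjb, hjb'⟩ := C.exists_hi_eq hb
  have hj : ja = jb := C.hi_inj (by rw [hja', hjb', hab])
  rw [← hja, ← hjb, hj]

/-! ### Sorted enumeration of the positive-side regions -/

noncomputable def pnum (C : Config n k) : ℕ := C.sP.card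

lemma card_ebImage (C : Config n k) : (C.sP.image C.eb).card = C.pnum :=
  Finset.card_image_of_injOn C.eb_injOn

noncomputable def oE (C : Config n k) :
    Fin C.pnum ≃o {x // x ∈ C.sP.image C.eb} :=
  (C.sP.image C.eb).orderIsoOfFin C.card_ebImage

noncomputable def Ee (C : Config n k) (u : Fin C.pnum) : ℝ := (C.oE u : ℝ)

lemma Ee_strictMono (C : Config n k) : StrictMono C.Ee := by
  intro a b h
  exact Subtype.coe_lt_coe.2 ((C.oE).lt_iff_lt.2 h)

lemma Ee_mem (C : Config n k) (u : Fin C.pnum) : C.Ee u ∈ C.sP.image C.eb :=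
  (C.oE u).2

lemma Ee_surj (C : Config n k) {x : ℝ} (hx : x ∈ C.sP.image C.eb) :
    ∃ u, C.Ee u = x := by
  refine ⟨(C.oE).symm ⟨x, hx⟩, ?_⟩
  simp [Ee]

lemma exists_unique_lab (C : Config n k) (u : Fin C.pnum) :
    ∃! i, i ∈ C.sP ∧ C.eb i = C.Ee u := by
  have hm := C.Ee_mem u
  simp only [mem_image] at hm
  obtain ⟨i, hi, hie⟩ := hm
  refine ⟨i, ⟨hi, hie⟩, ?_⟩
  rintro j ⟨hj, hje⟩
  exact C.eb_injOn hj hi (by rw [hje, hie])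

noncomputable def labP (C : Config n k) (u : Fin C.pnum) : Fin n :=
  Finset.choose (fun i => C.eb i = C.Ee u) C.sP (C.exists_unique_lab u)

lemma labP_mem (C : Config n k) (u : Fin C.pnum) : C.labP u ∈ C.sP :=
  (Finset.choose_spec (fun i => C.eb i = C.Ee u) C.sP (C.exists_unique_lab u)).1

lemma eb_labP (C : Config n k) (u : Fin C.pnum) : C.eb (C.labP u) = C.Ee u :=
  (Finset.choose_spec (fun i => C.eb i = C.Ee u) C.sP (C.exists_unique_lab u)).2

lemma Ee_nonneg (C : Config n k) (u : Fin C.pnum) : 0 ≤ C.Ee u :=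
  (C.eb_labP u) ▸ C.eb_nonneg _

lemma Ee_pos (C : Config n k) (u : Fin C.pnum) : 0 < C.Ee u :=
  (C.eb_labP u) ▸ C.eb_pos (C.labP_mem u)

lemma labP_inj (C : Config n k) : Function.Injective C.labP := by
  intro a b h
  have : C.Ee a = C.Ee b := by rw [← C.eb_labP a, ← C.eb_labP b, h]
  exact C.Ee_strictMono.injective this

lemma labP_surj (C : Config n k) {i : Fin n} (h : i ∈ C.sP) :
    ∃ u, C.labP u = i := by
  obtain ⟨u, hu⟩ := C.Ee_surj (mem_image_of_mem _ h)
  refine ⟨u, ?_⟩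
  have h1 := C.exists_unique_lab u
  exact (h1.unique ⟨C.labP_mem u, C.eb_labP u⟩ ⟨h, hu.symm⟩)

/-! ### Cumulative masses -/

noncomputable def filt (C : Config n k) (t : ℕ) : Finset (Fin n) :=
  C.sP.filter (fun i => ∃ u : Fin C.pnum, (u:ℕ) < t ∧ C.eb i = C.Ee u)

noncomputable def csum (C : Config n k) (t : ℕ) : ℝ := ∑ i ∈ C.filt t, C.pm i

noncomputable def cseq (C : Config n k) (t : ℕ) : ℝ := Real.sqrt (2 * C.csum t)

lemma filt_zero (C : Config n k) : C.filt 0 = ∅ := by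
  simp [filt]

lemma filt_mono (C : Config n k) {t t' : ℕ} (h : t ≤ t') : C.filt t ⊆ C.filt t' := by
  intro i hi
  simp only [filt, mem_filter] at hi ⊢
  obtain ⟨h1, u, hu, hue⟩ := hi
  exact ⟨h1, u, by omega, hue⟩

lemma filt_top (C : Config n k) {t : ℕ} (h : C.pnum ≤ t) : C.filt t = C.sP := by
  refine Finset.Subset.antisymm (Finset.filter_subset _ _) (fun i hi => ?_)
  obtain ⟨u, hu⟩ := C.Ee_surj (mem_image_of_mem C.eb hi)
  simp only [filt, mem_filter]
  exact ⟨hi, u, by omega, hu.symm⟩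

lemma labP_not_mem_filt (C : Config n k) (u : Fin C.pnum) :
    C.labP u ∉ C.filt u := by
  intro hmem
  simp only [filt, mem_filter] at hmem
  obtain ⟨-, v, hv, hve⟩ := hmem
  rw [C.eb_labP] at hve
  have : u = v := C.Ee_strictMono.injective hve
  omega

lemma filt_succ (C : Config n k) (u : Fin C.pnum) :
    C.filt ((u:ℕ)+1) = insert (C.labP u) (C.filt u) := by
  ext i
  simp only [filt, mem_filter, Finset.mem_insert]
  constructor
  · rintro ⟨hi, v, hv, hve⟩
    rcases Nat.lt_or_ge (v:ℕ) (u:ℕ) with hlt | hge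
    · exact Or.inr ⟨hi, v, hlt, hve⟩
    · have : v = u := Fin.ext (by omega)
      subst this
      left
      exact ((C.exists_unique_lab v).unique ⟨hi, hve⟩ ⟨C.labP_mem v, C.eb_labP v⟩)
  · rintro (rfl | ⟨hi, v, hv, hve⟩)
    · exact ⟨C.labP_mem u, u, by omega, C.eb_labP u⟩
    · exact ⟨hi, v, by omega, hve⟩

lemma csum_nonneg (C : Config n k) (t : ℕ) : 0 ≤ C.csum t :=
  Finset.sum_nonneg (fun i _ => C.pm_nonneg i)

lemma csum_mono (C : Config n k) : Monotone C.csum := by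
  intro t t' h
  exact Finset.sum_le_sum_of_subset_of_nonneg (C.filt_mono h)
    (fun i _ _ => C.pm_nonneg i)

lemma csum_zero (C : Config n k) : C.csum 0 = 0 := by
  simp [csum, filt_zero]

lemma csum_succ (C : Config n k) (u : Fin C.pnum) :
    C.csum ((u:ℕ)+1) = C.pm (C.labP u) + C.csum (u:ℕ) := by
  rw [csum, C.filt_succ u, Finset.sum_insert (C.labP_not_mem_filt u)]
  rfl

lemma cseq_nonneg (C : Config n k) (t : ℕ) : 0 ≤ C.cseq t := Real.sqrt_nonneg _

lemma cseq_zero (C : Config n k) : C.cseq 0 = 0 := by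
  simp [cseq, csum_zero]

lemma cseq_mono (C : Config n k) : Monotone C.cseq := by
  intro t t' h
  exact Real.sqrt_le_sqrt (by linarith [C.csum_mono h])

lemma cseq_sq (C : Config n k) (t : ℕ) : (C.cseq t)^2 = 2 * C.csum t :=
  Real.sq_sqrt (by linarith [C.csum_nonneg t])

lemma cseq_lt_succ (C : Config n k) (u : Fin C.pnum) :
    C.cseq (u:ℕ) < C.cseq ((u:ℕ)+1) := by
  have hpm : 0 < C.pm (C.labP u) := (C.mem_sP).1 (C.labP_mem u)
  refine Real.sqrt_lt_sqrt (by linarith [C.csum_nonneg (u:ℕ)]) ?_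
  rw [C.csum_succ u]
  linarith

/-! ### Interval integrals of `|x|` -/

lemma integral_abs_of_nonneg {a b : ℝ} (ha : 0 ≤ a) (hab : a ≤ b) :
    ∫ x in a..b, |x| = b^2/2 - a^2/2 := by
  rw [intervalIntegral.integral_congr (g := fun x => x)
    (fun x hx => by
      rw [Set.uIcc_of_le hab] at hx
      exact abs_of_nonneg (ha.trans hx.1)),
    integral_id]
  ring

lemma posInt (C : Config n k) (u : Fin C.pnum) :
    ∫ x in (C.cseq (u:ℕ))..(C.cseq ((u:ℕ)+1)), |x| = C.pm (C.labP u) := by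
  rw [integral_abs_of_nonneg (C.cseq_nonneg _) (C.cseq_mono (by omega))]
  have h1 := C.cseq_sq (u:ℕ)
  have h2 := C.cseq_sq ((u:ℕ)+1)
  have h3 := C.csum_succ u
  nlinarith [h1, h2, h3]

/-! ### Capacity bound -/

lemma capacity (C : Config n k) (u : Fin C.pnum) :
    C.csum ((u:ℕ)+1) ≤ (C.Ee u)^2 / 2 := by
  have hEnn : 0 ≤ C.Ee u := C.Ee_nonneg u
  have hE : ∀ i ∈ C.filt ((u:ℕ)+1), C.eb i ≤ C.Ee u := by
    intro i hi
    simp only [filt, mem_filter] at hi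
    obtain ⟨-, v, hv, hve⟩ := hi
    rw [hve]
    exact C.Ee_strictMono.monotone (by omega : v ≤ u)
  have h1 : C.csum ((u:ℕ)+1) =
      ∑ j ∈ univ.filter (fun j => C.lab j ∈ C.filt ((u:ℕ)+1)),
        ∫ x in Set.Ioo (C.lo j) (C.hi j) ∩ Set.Ioi 0, |x| := by
    rw [csum]
    rw [← Finset.sum_fiberwise_eq_sum_filter univ (C.filt ((u:ℕ)+1)) C.lab
      (fun j => ∫ x in Set.Ioo (C.lo j) (C.hi j) ∩ Set.Ioi 0, |x|)]
    rfl
  set J := univ.filter (fun j => C.lab j ∈ C.filt ((u:ℕ)+1)) with hJ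
  have hsub : ∀ j ∈ J, Set.Ioo (C.lo j) (C.hi j) ∩ Set.Ioi 0 ⊆ Set.Ioc 0 (C.Ee u) := by
    intro j hj
    simp only [hJ, mem_filter, mem_univ, true_and] at hj
    refine (C.piece_subset rfl).trans ?_
    exact Set.Ioc_subset_Ioc_right (hE _ hj)
  have h2 : ∑ j ∈ J, ∫ x in Set.Ioo (C.lo j) (C.hi j) ∩ Set.Ioi 0, |x| =
      ∫ x in ⋃ j ∈ J, Set.Ioo (C.lo j) (C.hi j) ∩ Set.Ioi 0, |x| := by
    refine (integral_biUnion_finset J (fun j _ => C.pieceMeas j) ?_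
      (fun j _ => absIntOn (C.pieceSub j))).symm
    intro a ha b hb hab
    refine Set.disjoint_of_subset Set.inter_subset_left Set.inter_subset_left ?_
    exact Set.disjoint_iff_inter_eq_empty.2 (C.disj a b hab)
  have h3 : (⋃ j ∈ J, Set.Ioo (C.lo j) (C.hi j) ∩ Set.Ioi 0) ⊆ Set.Ioc 0 (C.Ee u) :=
    Set.iUnion₂_subset hsub
  have h4 : ∫ x in ⋃ j ∈ J, Set.Ioo (C.lo j) (C.hi j) ∩ Set.Ioi 0, |x| ≤
      ∫ x in Set.Ioc 0 (C.Ee u), |x| := by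
    refine setIntegral_mono_set (absIntOn (le_refl _)) ?_ h3.eventuallyLE
    exact Filter.Eventually.of_forall (fun x => abs_nonneg x)
  have h5 : ∫ x in Set.Ioc 0 (C.Ee u), |x| = (C.Ee u)^2/2 := by
    rw [← intervalIntegral.integral_of_le hEnn, integral_abs_of_nonneg le_rfl hEnn]
    ring
  rw [h1]
  rw [h2]
  rw [h5] at h4
  exact h4

lemma cseq_le_Ee (C : Config n k) (u : Fin C.pnum) :
    C.cseq ((u:ℕ)+1) ≤ C.Ee u := by
  have h := C.capacity u
  have : C.cseq ((u:ℕ)+1) ≤ Real.sqrt ((C.Ee u)^2) :=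
    Real.sqrt_le_sqrt (by linarith)
  rwa [Real.sqrt_sq (C.Ee_nonneg u)] at this

/-! ### Reflection -/

noncomputable def refl (C : Config n k) : Config n k where
  lo j := -C.hi j
  hi j := -C.lo j
  lab := C.lab
  nondeg j := by simpa using C.nondeg j
  disj i j h := by
    have hd := Set.eq_empty_iff_forall_notMem.1 (C.disj i j h)
    refine Set.eq_empty_iff_forall_notMem.2 (fun x hx => ?_)
    simp only [Set.mem_inter_iff, Set.mem_Ioo] at hx
    refine hd (-x) ?_
    simp only [Set.mem_inter_iff, Set.mem_Ioo]
    constructor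
    · constructor <;> linarith [hx.1.1, hx.1.2]
    · constructor <;> linarith [hx.2.1, hx.2.2]

@[simp] lemma refl_lo (C : Config n k) (j : Fin k) : C.refl.lo j = -C.hi j := rfl
@[simp] lemma refl_hi (C : Config n k) (j : Fin k) : C.refl.hi j = -C.lo j := rfl
@[simp] lemma refl_lab (C : Config n k) : C.refl.lab = C.lab := rfl

lemma refl_piece_integral (C : Config n k) (j : Fin k) :
    ∫ x in Set.Ioo (C.refl.lo j) (C.refl.hi j) ∩ Set.Ioi 0, |x| =
    ∫ x in Set.Ioo (C.lo j) (C.hi j) ∩ Set.Iio 0, |x| := by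
  have himg : (fun x : ℝ => -x) '' (Set.Ioo (C.refl.lo j) (C.refl.hi j) ∩ Set.Ioi 0) =
      Set.Ioo (C.lo j) (C.hi j) ∩ Set.Iio 0 := by
    ext x
    simp only [Set.mem_image, Set.mem_inter_iff, Set.mem_Ioo, Set.mem_Ioi, Set.mem_Iio,
      refl_lo, refl_hi]
    constructor
    · rintro ⟨y, ⟨⟨h1, h2⟩, h3⟩, rfl⟩
      constructor
      · constructor <;> linarith
      · linarith
    · rintro ⟨⟨h1, h2⟩, h3⟩
      exact ⟨-x, ⟨⟨by linarith, by linarith⟩, by linarith⟩, by ring⟩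
  have := (Measure.measurePreserving_neg (volume : Measure ℝ)).setIntegral_image_emb
    measurableEmbedding_neg (fun x => |x|)
    (Set.Ioo (C.refl.lo j) (C.refl.hi j) ∩ Set.Ioi 0)
  rw [himg] at this
  simp only [abs_neg] at this
  exact this.symm

lemma piece_split (C : Config n k) (j : Fin k) :
    (∫ x in C.lo j..C.hi j, |x|) =
      (∫ x in Set.Ioo (C.lo j) (C.hi j) ∩ Set.Ioi 0, |x|) +
      ∫ x in Set.Ioo (C.refl.lo j) (C.refl.hi j) ∩ Set.Ioi 0, |x| := by
  rw [C.refl_piece_integral j]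
  rw [intervalIntegral.integral_of_le (C.nondeg j).le, integral_Ioc_eq_integral_Ioo]
  have hsplit : Set.Ioo (C.lo j) (C.hi j) =
      (Set.Ioo (C.lo j) (C.hi j) ∩ Set.Ici 0) ∪
      (Set.Ioo (C.lo j) (C.hi j) ∩ Set.Iio 0) := by
    ext x
    simp only [Set.mem_union, Set.mem_inter_iff, Set.mem_Ioo, Set.mem_Ici, Set.mem_Iio]
    constructor
    · intro h
      rcases le_or_gt 0 x with h0 | h0
      · exact Or.inl ⟨h, h0⟩
      · exact Or.inr ⟨h, h0⟩
    · rintro (⟨h, -⟩ | ⟨h, -⟩) <;> exact h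
  have hA : IntegrableOn (fun x : ℝ => |x|)
      (Set.Ioo (C.lo j) (C.hi j) ∩ Set.Ici 0) volume :=
    absIntOn (a := C.lo j) (b := C.hi j) (fun x hx => ⟨hx.1.1, hx.1.2.le⟩)
  have hB : IntegrableOn (fun x : ℝ => |x|)
      (Set.Ioo (C.lo j) (C.hi j) ∩ Set.Iio 0) volume :=
    absIntOn (a := C.lo j) (b := C.hi j) (fun x hx => ⟨hx.1.1, hx.1.2.le⟩)
  have hdisj : Disjoint (Set.Ioo (C.lo j) (C.hi j) ∩ Set.Ici 0)
      (Set.Ioo (C.lo j) (C.hi j) ∩ Set.Iio 0) :=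
    Set.disjoint_left.2 (fun x hx hx' =>
      absurd (Set.mem_Ici.1 hx.2) (not_le.2 (Set.mem_Iio.1 hx'.2)))
  have hu := setIntegral_union hdisj (measurableSet_Ioo.inter measurableSet_Iio) hA hB
  have hae : (Set.Ioo (C.lo j) (C.hi j) ∩ Set.Ici 0 : Set ℝ) =ᵐ[volume]
      (Set.Ioo (C.lo j) (C.hi j) ∩ Set.Ioi 0 : Set ℝ) :=
    Filter.EventuallyEq.inter (Filter.EventuallyEq.refl _ _) Ioi_ae_eq_Ici.symm
  rw [setIntegral_congr_set hae] at hu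
  conv_lhs => rw [hsplit]
  rw [hu]

lemma mass_split (C : Config n k) (i : Fin n) :
    C.mass i = C.pm i + C.refl.pm i := by
  rw [mass, pm, pm]
  simp only [refl_lab]
  exact (Finset.sum_congr rfl (fun j _ => C.piece_split j)).trans Finset.sum_add_distrib

/-! ### Positivity of at least one side -/

lemma piecePos (C : Config n k) (j : Fin k) (h : 0 < C.hi j) :
    0 < ∫ x in Set.Ioo (C.lo j) (C.hi j) ∩ Set.Ioi 0, |x| := by
  rw [setIntegral_pos_iff_support_of_nonneg_ae
    (Filter.Eventually.of_forall (fun x => abs_nonneg x)) (absIntOn (C.pieceSub j))]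
  have hset : Function.support (fun x : ℝ => |x|) ∩
      (Set.Ioo (C.lo j) (C.hi j) ∩ Set.Ioi 0) =
      Set.Ioo (max (C.lo j) 0) (C.hi j) := by
    ext x
    simp only [Function.support, Set.mem_inter_iff, Set.mem_setOf_eq, Set.mem_Ioo,
      Set.mem_Ioi, abs_ne_zero, max_lt_iff]
    constructor
    · rintro ⟨h1, ⟨h2, h3⟩, h4⟩
      exact ⟨⟨h2, h4⟩, h3⟩
    · rintro ⟨⟨h1, h2⟩, h3⟩
      exact ⟨ne_of_gt h2, ⟨h1, h3⟩, h2⟩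
  rw [hset, Real.volume_Ioo]
  rw [ENNReal.ofReal_pos]
  have := C.nondeg j
  simp only [sub_pos, max_lt_iff]
  exact ⟨this, h⟩

lemma pnum_pos_of_hi_pos (C : Config n k) (j : Fin k) (h : 0 < C.hi j) :
    0 < C.pnum := by
  have hpos : 0 < C.pm (C.lab j) := by
    refine lt_of_lt_of_le (C.piecePos j h) ?_
    refine Finset.single_le_sum (fun j' _ => C.pieceInt_nonneg j') ?_
    simp
  exact Finset.card_pos.2 ⟨C.lab j, (C.mem_sP).2 hpos⟩

lemma total_pos (C : Config n k) (hk : 0 < k) : 0 < C.pnum + C.refl.pnum := by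
  set j0 : Fin k := ⟨0, hk⟩
  rcases lt_or_ge 0 (C.hi j0) with h | h
  · have := C.pnum_pos_of_hi_pos j0 h
    omega
  · have h2 : 0 < C.refl.hi j0 := by
      simp only [refl_hi]
      have := C.nondeg j0
      linarith
    have := C.refl.pnum_pos_of_hi_pos j0 h2
    omega

/-! ### Generic helper lemmas -/

lemma Ioo_inter_empty {a b c d : ℝ} (h : b ≤ c) :
    Set.Ioo a b ∩ Set.Ioo c d = ∅ := by
  refine Set.eq_empty_iff_forall_notMem.2 (fun x hx => ?_)
  simp only [Set.mem_inter_iff, Set.mem_Ioo] at hx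
  linarith [hx.1.2, hx.2.1]

lemma sum_image_le_gen {α : Type*} [DecidableEq α] (s : Finset α) (f : α → ℝ)
    (g : ℝ → ℝ) (hg : ∀ x, 0 ≤ g x) :
    ∑ b ∈ s.image f, g b ≤ ∑ a ∈ s, g (f a) := by
  induction s using Finset.induction with
  | empty => simp
  | insert a s h ih =>
    rw [Finset.image_insert, Finset.sum_insert h]
    by_cases hfa : f a ∈ s.image f
    · rw [Finset.insert_eq_self.2 hfa]
      linarith [hg (f a)]
    · rw [Finset.sum_insert hfa]
      linarith

lemma fin_add_dec {p q : ℕ} (j : Fin (p+q)) :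
    (∃ t : Fin p, j = Fin.castAdd q t) ∨ (∃ t : Fin q, j = Fin.natAdd p t) := by
  rcases Nat.lt_or_ge j.1 p with h | h
  · exact Or.inl ⟨⟨j.1, h⟩, by ext; simp⟩
  · exact Or.inr ⟨⟨j.1 - p, by omega⟩, by ext; simp; omega⟩

lemma iUnion_addCases {p q : ℕ} (f : Fin (p+q) → Set ℝ) :
    (⋃ j, f j) = (⋃ u : Fin p, f (Fin.castAdd q u)) ∪ ⋃ u : Fin q, f (Fin.natAdd p u) := by
  ext x
  simp only [Set.mem_iUnion, Set.mem_union]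
  constructor
  · rintro ⟨j, hj⟩
    rcases fin_add_dec j with ⟨t, rfl⟩ | ⟨t, rfl⟩
    · exact Or.inl ⟨t, hj⟩
    · exact Or.inr ⟨t, hj⟩
  · rintro (⟨u, hu⟩ | ⟨u, hu⟩)
    · exact ⟨_, hu⟩
    · exact ⟨_, hu⟩

lemma iUnion_chain {c : ℕ → ℝ} (hc : Monotone c) {p : ℕ} (hp : 0 < p) :
    (⋃ u : Fin p, Set.Icc (c u) (c (u+1))) = Set.Icc (c 0) (c p) := by
  apply Set.Subset.antisymm
  · refine Set.iUnion_subset (fun u x hx => ?_)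
    exact ⟨(hc (Nat.zero_le _)).trans hx.1, hx.2.trans (hc (by omega : (u:ℕ)+1 ≤ p))⟩
  · induction p with
    | zero => omega
    | succ p ih =>
      intro x hx
      rcases le_or_gt x (c p) with h | h
      · rcases Nat.eq_zero_or_pos p with rfl | hp'
        · refine Set.mem_iUnion.2 ⟨⟨0, by omega⟩, ⟨hx.1, ?_⟩⟩
          have hx1 : x ≤ c 0 := h
          exact hx1.trans (hc (by omega))
        · obtain ⟨u, hu⟩ := Set.mem_iUnion.1 (ih hp' ⟨hx.1, h⟩)
          exact Set.mem_iUnion.2 ⟨⟨u.1, by omega⟩, hu⟩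
      · exact Set.mem_iUnion.2 ⟨⟨p, by omega⟩, ⟨h.le, hx.2⟩⟩

lemma neg_chain {c : ℕ → ℝ} (hc : Monotone c) (h0 : c 0 = 0) {q : ℕ} (hq : 0 < q) :
    (⋃ u : Fin q, Set.Icc (-(c (u+1))) (-(c u))) = Set.Icc (-(c q)) 0 := by
  have h1 : (⋃ u : Fin q, Set.Icc (-(c (u+1))) (-(c u))) =
      -(⋃ u : Fin q, Set.Icc (c (u:ℕ)) (c (u+1))) := by
    ext x
    simp only [Set.mem_iUnion, Set.mem_neg, Set.mem_Icc]
    constructor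
    · rintro ⟨u, h1, h2⟩
      exact ⟨u, by linarith, by linarith⟩
    · rintro ⟨u, h1, h2⟩
      exact ⟨u, by linarith, by linarith⟩
  rw [h1, iUnion_chain hc hq, show -Set.Icc (c 0) (c q) = Set.Icc (-(c q)) (-(c 0)) from
    Set.neg_Icc _ _, h0, neg_zero]

/-! ### The condensed configuration -/

noncomputable def cond (C : Config n k) : Config n (C.pnum + C.refl.pnum) where
  lo := Fin.addCases (fun u => C.cseq (u:ℕ)) (fun u => -(C.refl.cseq ((u:ℕ)+1)))
  hi := Fin.addCases (fun u => C.cseq ((u:ℕ)+1)) (fun u => -(C.refl.cseq (u:ℕ)))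
  lab := Fin.addCases C.labP C.refl.labP
  nondeg := by
    intro j
    rcases fin_add_dec j with ⟨u, rfl⟩ | ⟨u, rfl⟩
    · simpa using C.cseq_lt_succ u
    · simpa using neg_lt_neg (C.refl.cseq_lt_succ u)
  disj := by
    intro a b hab
    rcases fin_add_dec a with ⟨u, rfl⟩ | ⟨u, rfl⟩ <;>
      rcases fin_add_dec b with ⟨v, rfl⟩ | ⟨v, rfl⟩ <;>
      simp only [Fin.addCases_left, Fin.addCases_right]
    · have huv : u ≠ v := fun h => hab (by rw [h])
      rcases Nat.lt_or_ge (u:ℕ) (v:ℕ) with h | h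
      · exact Ioo_inter_empty (C.cseq_mono (by omega : (u:ℕ)+1 ≤ (v:ℕ)))
      · have hvu : (v:ℕ) < (u:ℕ) := by
          rcases Nat.lt_or_ge (v:ℕ) (u:ℕ) with h' | h'
          · exact h'
          · exact absurd (Fin.ext (by omega)) huv
        rw [Set.inter_comm]
        exact Ioo_inter_empty (C.cseq_mono (by omega : (v:ℕ)+1 ≤ (u:ℕ)))
    · refine Set.eq_empty_iff_forall_notMem.2 (fun x hx => ?_)
      simp only [Set.mem_inter_iff, Set.mem_Ioo] at hx
      have h1 := C.cseq_nonneg (u:ℕ)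
      have h2 := C.refl.cseq_nonneg (v:ℕ)
      linarith [hx.1.1, hx.2.2]
    · refine Set.eq_empty_iff_forall_notMem.2 (fun x hx => ?_)
      simp only [Set.mem_inter_iff, Set.mem_Ioo] at hx
      have h1 := C.cseq_nonneg (v:ℕ)
      have h2 := C.refl.cseq_nonneg (u:ℕ)
      linarith [hx.1.2, hx.2.1]
    · have huv : u ≠ v := fun h => hab (by rw [h])
      rcases Nat.lt_or_ge (u:ℕ) (v:ℕ) with h | h
      · rw [Set.inter_comm]
        exact Ioo_inter_empty (by simpa using neg_le_neg (C.refl.cseq_mono (by omega : (u:ℕ)+1 ≤ (v:ℕ))))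
      · have hvu : (v:ℕ) < (u:ℕ) := by
          rcases Nat.lt_or_ge (v:ℕ) (u:ℕ) with h' | h'
          · exact h'
          · exact absurd (Fin.ext (by omega)) huv
        exact Ioo_inter_empty (by simpa using neg_le_neg (C.refl.cseq_mono (by omega : (v:ℕ)+1 ≤ (u:ℕ))))

@[simp] lemma cond_lo_cast (C : Config n k) (u : Fin C.pnum) :
    C.cond.lo (Fin.castAdd _ u) = C.cseq (u:ℕ) := by simp [cond]
@[simp] lemma cond_hi_cast (C : Config n k) (u : Fin C.pnum) :
    C.cond.hi (Fin.castAdd _ u) = C.cseq ((u:ℕ)+1) := by simp [cond]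
@[simp] lemma cond_lab_cast (C : Config n k) (u : Fin C.pnum) :
    C.cond.lab (Fin.castAdd _ u) = C.labP u := by simp [cond]
@[simp] lemma cond_lo_nat (C : Config n k) (u : Fin C.refl.pnum) :
    C.cond.lo (Fin.natAdd _ u) = -(C.refl.cseq ((u:ℕ)+1)) := by simp [cond]
@[simp] lemma cond_hi_nat (C : Config n k) (u : Fin C.refl.pnum) :
    C.cond.hi (Fin.natAdd _ u) = -(C.refl.cseq (u:ℕ)) := by simp [cond]
@[simp] lemma cond_lab_nat (C : Config n k) (u : Fin C.refl.pnum) :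
    C.cond.lab (Fin.natAdd _ u) = C.refl.labP u := by simp [cond]

lemma negInt (C : Config n k) (u : Fin C.refl.pnum) :
    ∫ x in (-(C.refl.cseq ((u:ℕ)+1)))..(-(C.refl.cseq (u:ℕ))), |x| =
      C.refl.pm (C.refl.labP u) := by
  have h := intervalIntegral.integral_comp_neg (a := (C.refl.cseq (u:ℕ)))
    (b := C.refl.cseq ((u:ℕ)+1)) (fun x => |x|)
  simp only [abs_neg] at h
  rw [← h]
  exact C.refl.posInt u

lemma sum_ite_labP (C : Config n k) (i : Fin n) :
    ∑ u : Fin C.pnum, (if C.labP u = i then C.pm (C.labP u) else 0) = C.pm i := by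
  by_cases hi : i ∈ C.sP
  · obtain ⟨u₀, hu₀⟩ := C.labP_surj hi
    rw [Finset.sum_eq_single u₀]
    · simp [hu₀]
    · intro u _ hu
      have : C.labP u ≠ i := fun h => hu (C.labP_inj (h.trans hu₀.symm))
      simp [this]
    · simp
  · have hz : C.pm i = 0 := C.pm_eq_zero hi
    rw [hz]
    refine Finset.sum_eq_zero (fun u _ => ?_)
    have : C.labP u ≠ i := fun h => hi (h ▸ C.labP_mem u)
    simp [this]

lemma cond_mass (C : Config n k) (i : Fin n) : C.cond.mass i = C.mass i := by
  rw [mass, Finset.sum_filter, Fin.sum_univ_add]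
  simp only [cond_lab_cast, cond_lab_nat, cond_lo_cast, cond_hi_cast, cond_lo_nat,
    cond_hi_nat, posInt, negInt]
  rw [C.sum_ite_labP i, C.refl.sum_ite_labP i, C.mass_split i]

/-! ### Perimeter bound -/

lemma sum_Ee (C : Config n k) :
    ∑ u : Fin C.pnum, C.Ee u = ∑ x ∈ C.sP.image C.eb, x := by
  have h := Equiv.sum_comp (C.oE).toEquiv
    (fun x : {x // x ∈ C.sP.image C.eb} => (x:ℝ))
  rw [Finset.sum_coe_sort (C.sP.image C.eb) (fun x => x)] at h
  exact h

lemma sum_cseq_le (C : Config n k) :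
    ∑ u : Fin C.pnum, C.cseq ((u:ℕ)+1) ≤ ∑ x ∈ C.sP.image C.eb, x := by
  rw [← C.sum_Ee]
  exact Finset.sum_le_sum (fun u _ => C.cseq_le_Ee u)

lemma cond_perim (C : Config n k) : C.cond.perim ≤ C.perim := by
  classical
  set imgP : Finset ℝ := univ.image (fun u : Fin C.pnum => C.cseq ((u:ℕ)+1)) with himgP
  set imgN : Finset ℝ := univ.image (fun u : Fin C.refl.pnum => -(C.refl.cseq ((u:ℕ)+1))) with himgN
  -- Step A : endpointSet of cond is inside insert 0 (imgP ∪ imgN)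
  have hsub : C.cond.endpointSet ⊆ insert 0 (imgP ∪ imgN) := by
    intro x hx
    rw [endpointSet, Finset.mem_union] at hx
    simp only [Finset.mem_insert, Finset.mem_union, himgP, himgN, Finset.mem_image,
      Finset.mem_univ, true_and]
    rcases hx with hx | hx <;> simp only [Finset.mem_image, Finset.mem_univ, true_and] at hx <;>
      obtain ⟨j, hj⟩ := hx
    · rcases fin_add_dec j with ⟨u, rfl⟩ | ⟨u, rfl⟩
      · rw [cond_lo_cast] at hj
        rcases Nat.eq_zero_or_pos (u:ℕ) with h0 | h0
        · left; rw [← hj, h0, C.cseq_zero]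
        · right; left
          exact ⟨⟨(u:ℕ)-1, by omega⟩, by simpa [Nat.sub_add_cancel h0] using hj⟩
      · rw [cond_lo_nat] at hj
        right; right; exact ⟨u, hj⟩
    · rcases fin_add_dec j with ⟨u, rfl⟩ | ⟨u, rfl⟩
      · rw [cond_hi_cast] at hj
        right; left; exact ⟨u, hj⟩
      · rw [cond_hi_nat] at hj
        rcases Nat.eq_zero_or_pos (u:ℕ) with h0 | h0
        · left; rw [← hj, h0, C.refl.cseq_zero, neg_zero]
        · right; right
          exact ⟨⟨(u:ℕ)-1, by omega⟩, by simpa [Nat.sub_add_cancel h0] using hj⟩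
  have hA : C.cond.perim ≤ ∑ x ∈ imgP, |x| + ∑ x ∈ imgN, |x| := by
    have h1 : C.cond.perim ≤ ∑ x ∈ insert 0 (imgP ∪ imgN), |x| :=
      Finset.sum_le_sum_of_subset_of_nonneg hsub (fun x _ _ => abs_nonneg x)
    have h2 : ∑ x ∈ insert 0 (imgP ∪ imgN), |x| = ∑ x ∈ imgP ∪ imgN, |x| :=
      Finset.sum_insert_of_eq_zero_if_notMem (fun _ => abs_zero)
    have h3 : ∑ x ∈ imgP ∪ imgN, |x| ≤ ∑ x ∈ imgP, |x| + ∑ x ∈ imgN, |x| := by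
      have := Finset.sum_union_inter (s₁ := imgP) (s₂ := imgN) (f := fun x => |x|)
      have h4 : 0 ≤ ∑ x ∈ imgP ∩ imgN, |x| := Finset.sum_nonneg (fun x _ => abs_nonneg x)
      linarith
    calc C.cond.perim ≤ ∑ x ∈ insert 0 (imgP ∪ imgN), |x| := h1
      _ = ∑ x ∈ imgP ∪ imgN, |x| := h2
      _ ≤ ∑ x ∈ imgP, |x| + ∑ x ∈ imgN, |x| := h3
  -- Step B : bound each side by the sums of the e-values
  have hBP : ∑ x ∈ imgP, |x| ≤ ∑ x ∈ C.sP.image C.eb, x := by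
    refine le_trans (sum_image_le_gen univ _ (fun x => |x|) (fun x => abs_nonneg x)) ?_
    refine le_trans (Finset.sum_le_sum (fun u _ => le_of_eq (abs_of_nonneg (C.cseq_nonneg _)))) ?_
    exact C.sum_cseq_le
  have hBN : ∑ x ∈ imgN, |x| ≤ ∑ x ∈ C.refl.sP.image C.refl.eb, x := by
    refine le_trans (sum_image_le_gen univ _ (fun x => |x|) (fun x => abs_nonneg x)) ?_
    refine le_trans (Finset.sum_le_sum (fun u _ => le_of_eq ?_)) C.refl.sum_cseq_le
    show |(-(C.refl.cseq ((u:ℕ)+1)))| = C.refl.cseq ((u:ℕ)+1)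
    rw [abs_neg]
    exact abs_of_nonneg (C.refl.cseq_nonneg _)
  -- Step C : the e-values inject into the original endpoint set
  set G : Finset ℝ := (C.sP.image C.eb) ∪ ((C.refl.sP.image C.refl.eb).image (fun x => -x)) with hG
  have hposP : ∀ x ∈ C.sP.image C.eb, 0 < x := by
    intro x hx
    simp only [Finset.mem_image] at hx
    obtain ⟨i, hi, rfl⟩ := hx
    exact C.eb_pos hi
  have hposN : ∀ x ∈ C.refl.sP.image C.refl.eb, 0 < x := by
    intro x hx
    simp only [Finset.mem_image] at hx
    obtain ⟨i, hi, rfl⟩ := hx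
    exact C.refl.eb_pos hi
  have hdisjG : Disjoint (C.sP.image C.eb) ((C.refl.sP.image C.refl.eb).image (fun x => -x)) := by
    rw [Finset.disjoint_left]
    intro x hx hx'
    have h1 := hposP x hx
    simp only [Finset.mem_image] at hx'
    obtain ⟨y, hy, rfl⟩ := hx'
    have h2 := hposN y (Finset.mem_image.2 hy)
    linarith
  have hsumG : ∑ x ∈ G, |x| = ∑ x ∈ C.sP.image C.eb, x + ∑ x ∈ C.refl.sP.image C.refl.eb, x := by
    rw [hG, Finset.sum_union hdisjG]
    congr 1
    · exact Finset.sum_congr rfl (fun x hx => abs_of_pos (hposP x hx))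
    · rw [Finset.sum_image (fun x hx y hy hxy => by linarith)]
      exact Finset.sum_congr rfl (fun x hx => by rw [abs_neg, abs_of_pos (hposN x hx)])
  have hGsub : G ⊆ C.endpointSet := by
    intro x hx
    rw [hG, Finset.mem_union] at hx
    rw [endpointSet, Finset.mem_union]
    rcases hx with hx | hx
    · simp only [Finset.mem_image] at hx
      obtain ⟨i, hi, rfl⟩ := hx
      obtain ⟨j, hj, hje⟩ := C.exists_hi_eq hi
      right
      exact Finset.mem_image.2 ⟨j, Finset.mem_univ j, hje⟩
    · simp only [Finset.mem_image] at hx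
      obtain ⟨y, ⟨i, hi, rfl⟩, rfl⟩ := hx
      obtain ⟨j, hj, hje⟩ := C.refl.exists_hi_eq hi
      left
      refine Finset.mem_image.2 ⟨j, Finset.mem_univ j, ?_⟩
      rw [← hje, refl_hi, neg_neg]
  have hC : ∑ x ∈ C.sP.image C.eb, x + ∑ x ∈ C.refl.sP.image C.refl.eb, x ≤ C.perim := by
    rw [← hsumG]
    exact Finset.sum_le_sum_of_subset_of_nonneg hGsub (fun x _ _ => abs_nonneg x)
  linarith

/-! ### Condensed properties -/

lemma cond_union (C : Config n k) (hk : 0 < k) :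
    (⋃ j, Set.Icc (C.cond.lo j) (C.cond.hi j)) =
      Set.Icc (-(C.refl.cseq C.refl.pnum)) (C.cseq C.pnum) := by
  rw [iUnion_addCases]
  simp only [cond_lo_cast, cond_hi_cast, cond_lo_nat, cond_hi_nat]
  rcases Nat.eq_zero_or_pos C.pnum with hp | hp <;>
    rcases Nat.eq_zero_or_pos C.refl.pnum with hq | hq
  · exfalso
    have := C.total_pos hk
    omega
  · have he : (⋃ u : Fin C.pnum, Set.Icc (C.cseq (u:ℕ)) (C.cseq ((u:ℕ)+1))) = ∅ := by
      rw [hp]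
      exact Set.iUnion_of_empty _
    rw [he, Set.empty_union, neg_chain C.refl.cseq_mono C.refl.cseq_zero hq, hp, C.cseq_zero]
  · have he : (⋃ u : Fin C.refl.pnum,
        Set.Icc (-(C.refl.cseq ((u:ℕ)+1))) (-(C.refl.cseq (u:ℕ)))) = ∅ := by
      rw [hq]
      exact Set.iUnion_of_empty _
    rw [he, Set.union_empty, iUnion_chain C.cseq_mono hp, C.cseq_zero, hq, C.refl.cseq_zero,
      neg_zero]
  · rw [iUnion_chain C.cseq_mono hp, neg_chain C.refl.cseq_mono C.refl.cseq_zero hq,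
      C.cseq_zero]
    rw [Set.union_comm]
    exact Set.Icc_union_Icc_eq_Icc (by simpa using C.refl.cseq_nonneg _)
      (C.cseq_nonneg _)

lemma cond_card_le (C : Config n k) (i : Fin n) :
    (univ.filter (fun j => C.cond.lab j = i ∧ C.cond.hi j ≤ 0)).card ≤ 1 ∧
    (univ.filter (fun j => C.cond.lab j = i ∧ 0 ≤ C.cond.lo j)).card ≤ 1 := by
  constructor
  · rw [Finset.card_le_one]
    intro a ha b hb
    simp only [mem_filter, mem_univ, true_and] at ha hb
    rcases fin_add_dec a with ⟨u, rfl⟩ | ⟨u, rfl⟩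
    · exfalso
      rw [cond_hi_cast] at ha
      have h1 := C.cseq_nonneg (u:ℕ)
      have h2 := C.cseq_lt_succ u
      linarith [ha.2]
    · rcases fin_add_dec b with ⟨v, rfl⟩ | ⟨v, rfl⟩
      · exfalso
        rw [cond_hi_cast] at hb
        have h1 := C.cseq_nonneg (v:ℕ)
        have h2 := C.cseq_lt_succ v
        linarith [hb.2]
      · rw [cond_lab_nat] at ha hb
        have : u = v := C.refl.labP_inj (ha.1.trans hb.1.symm)
        rw [this]
  · rw [Finset.card_le_one]
    intro a ha b hb
    simp only [mem_filter, mem_univ, true_and] at ha hb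
    rcases fin_add_dec a with ⟨u, rfl⟩ | ⟨u, rfl⟩
    · rcases fin_add_dec b with ⟨v, rfl⟩ | ⟨v, rfl⟩
      · rw [cond_lab_cast] at ha hb
        have : u = v := C.labP_inj (ha.1.trans hb.1.symm)
        rw [this]
      · exfalso
        rw [cond_lo_nat] at hb
        have h1 := C.refl.cseq_nonneg ((v:ℕ))
        have h2 := C.refl.cseq_lt_succ v
        have := hb.2
        linarith
    · exfalso
      rw [cond_lo_nat] at ha
      have h1 := C.refl.cseq_nonneg ((u:ℕ))
      have h2 := C.refl.cseq_lt_succ u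
      have := ha.2
      linarith

lemma cond_card_two (C : Config n k) (i : Fin n) :
    (univ.filter (fun j => C.cond.lab j = i)).card ≤ 2 := by
  have hsub : (univ.filter (fun j => C.cond.lab j = i)) ⊆
      (univ.filter (fun j => C.cond.lab j = i ∧ C.cond.hi j ≤ 0)) ∪
      (univ.filter (fun j => C.cond.lab j = i ∧ 0 ≤ C.cond.lo j)) := by
    intro j hj
    simp only [mem_filter, mem_univ, true_and] at hj
    rw [Finset.mem_union]
    rcases fin_add_dec j with ⟨u, rfl⟩ | ⟨u, rfl⟩
    · right
      simp only [mem_filter, mem_univ, true_and]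
      exact ⟨hj, by rw [cond_lo_cast]; exact C.cseq_nonneg _⟩
    · left
      simp only [mem_filter, mem_univ, true_and]
      refine ⟨hj, ?_⟩
      rw [cond_hi_nat]
      simpa using C.refl.cseq_nonneg _
  have h := C.cond_card_le i
  calc (univ.filter (fun j => C.cond.lab j = i)).card
      ≤ ((univ.filter (fun j => C.cond.lab j = i ∧ C.cond.hi j ≤ 0)) ∪
        (univ.filter (fun j => C.cond.lab j = i ∧ 0 ≤ C.cond.lo j))).card :=
        Finset.card_le_card hsub
    _ ≤ (univ.filter (fun j => C.cond.lab j = i ∧ C.cond.hi j ≤ 0)).card +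
        (univ.filter (fun j => C.cond.lab j = i ∧ 0 ≤ C.cond.lo j)).card :=
        Finset.card_union_le _ _
    _ ≤ 2 := by omega

lemma cond_condensed (C : Config n k) (hk : 0 < k) : C.cond.Condensed := by
  constructor
  · refine ⟨-(C.refl.cseq C.refl.pnum), C.cseq C.pnum, ?_, C.cseq_nonneg _, C.cond_union hk⟩
    simpa using C.refl.cseq_nonneg _
  · exact C.cond_card_le

end Config

/-- Every (nonempty) configuration of `n` regions on `ℝ` with density `|x|` can be
replaced by a condensed configuration with the same list of weighted masses, at most
`2n` intervals, each region consisting of at most `2` intervals, `0` in the union of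
its intervals, and total weighted perimeter at most that of the original. -/
theorem condense_to_origin (n k : ℕ) (hk : 0 < k) (C : Config n k) :
    ∃ (k' : ℕ) (C' : Config n k'),
      k' ≤ 2 * n ∧ C'.Condensed ∧
      (∀ i, C'.mass i = C.mass i) ∧
      C'.perim ≤ C.perim ∧
      (∀ i : Fin n, (univ.filter (fun j => C'.lab j = i)).card ≤ 2) ∧
      (0 : ℝ) ∈ ⋃ j, Set.Icc (C'.lo j) (C'.hi j) := by
  refine ⟨C.pnum + C.refl.pnum, C.cond, ?_, C.cond_condensed hk, C.cond_mass,
    C.cond_perim, C.cond_card_two, ?_⟩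
  · have h1 : C.pnum ≤ n := by
      have := Finset.card_filter_le (univ : Finset (Fin n)) (fun i => 0 < C.pm i)
      simpa [Config.pnum, Config.sP] using this
    have h2 : C.refl.pnum ≤ n := by
      have := Finset.card_filter_le (univ : Finset (Fin n)) (fun i => 0 < C.refl.pm i)
      simpa [Config.pnum, Config.sP] using this
    omega
  · rw [C.cond_union hk]
    exact Set.mem_Icc.2 ⟨by simpa using C.refl.cseq_nonneg _, C.cseq_nonneg _⟩
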